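/- Let ν > 0 and 0 ≤ b < a. Then lim_{t→∞} t^ν I(t) = C_ν. -/

import Mathlib

open MeasureTheory Filter

/-- `F ν x t = (x^{2ν}/(2^ν Γ(ν))) ∫_t^∞ s^{-(ν+1)} exp(-x²/(2s)) ds`. -/
noncomputable def F (ν x t : ℝ) : ℝ :=
  (x ^ (2 * ν) / (2 ^ ν * Real.Gamma ν)) *
    ∫ s in Set.Ioi t, s ^ (-(ν + 1)) * Real.exp (-x ^ 2 / (2 * s))

lemma integrableOn_aux (ν x t : ℝ) (hν : 0 < ν) (ht : 0 < t) :
    IntegrableOn (fun s : ℝ => s ^ (-(ν + 1)) * Real.exp (-x ^ 2 / (2 * s)))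
      (Set.Ioi t) := by
  apply (integrableOn_Ioi_rpow_of_lt (by linarith : -(ν+1) < -1) ht).mono'
  · apply Measurable.aestronglyMeasurable
    fun_prop
  · filter_upwards [ae_restrict_mem measurableSet_Ioi] with s hs
    have hs0 : 0 < s := ht.trans hs
    have h1 : Real.exp (-x ^ 2 / (2 * s)) ≤ 1 := by
      rw [Real.exp_le_one_iff]
      exact div_nonpos_of_nonpos_of_nonneg (neg_nonpos.2 (by positivity)) (by positivity)
    have h2 : (0:ℝ) ≤ s ^ (-(ν + 1)) := Real.rpow_nonneg hs0.le _
    rw [Real.norm_eq_abs, abs_of_nonneg (by positivity)]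
    calc s ^ (-(ν + 1)) * Real.exp (-x ^ 2 / (2 * s)) ≤ s ^ (-(ν + 1)) * 1 := by
          exact mul_le_mul_of_nonneg_left h1 h2
      _ = s ^ (-(ν + 1)) := mul_one _

lemma key (ν x : ℝ) (hν : 0 < ν) :
    Tendsto (fun t : ℝ => t ^ ν *
      ∫ s in Set.Ioi t, s ^ (-(ν + 1)) * Real.exp (-x ^ 2 / (2 * s))) atTop (nhds ν⁻¹) := by
  have hval : ∀ t : ℝ, 0 < t → ∫ s in Set.Ioi t, s ^ (-(ν + 1)) = t ^ (-ν) / ν := by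
    intro t ht
    rw [integral_Ioi_rpow_of_lt (by linarith) ht]
    rw [show -(ν+1) + 1 = -ν by ring]
    rw [neg_div, div_neg, neg_neg]
  have hlow : ∀ᶠ t in atTop, Real.exp (-x ^ 2 / (2 * t)) / ν ≤
      t ^ ν * ∫ s in Set.Ioi t, s ^ (-(ν + 1)) * Real.exp (-x ^ 2 / (2 * s)) := by
    filter_upwards [eventually_gt_atTop 0] with t ht
    have h1 : Real.exp (-x ^ 2 / (2 * t)) * (t ^ (-ν) / ν) ≤
        ∫ s in Set.Ioi t, s ^ (-(ν + 1)) * Real.exp (-x ^ 2 / (2 * s)) := by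
      rw [← hval t ht, ← MeasureTheory.integral_const_mul]
      apply setIntegral_mono_on
      · exact ((integrableOn_Ioi_rpow_of_lt (by linarith : -(ν+1) < -1) ht).const_mul _)
      · exact integrableOn_aux ν x t hν ht
      · exact measurableSet_Ioi
      · intro s hs
        have hs0 : 0 < s := ht.trans hs
        rw [mul_comm (Real.exp _)]
        apply mul_le_mul_of_nonneg_left _ (Real.rpow_nonneg hs0.le _)
        apply Real.exp_le_exp.2
        rw [neg_div, neg_div, neg_le_neg_iff]
        have h2ts : 2 * t ≤ 2 * s := by linarith [(Set.mem_Ioi.1 hs).le]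
        gcongr
    calc Real.exp (-x ^ 2 / (2 * t)) / ν
        = t ^ ν * (Real.exp (-x ^ 2 / (2 * t)) * (t ^ (-ν) / ν)) := by
          rw [Real.rpow_neg ht.le]
          field_simp
      _ ≤ _ := by
          apply mul_le_mul_of_nonneg_left h1 (Real.rpow_nonneg ht.le _)
  have hup : ∀ᶠ t in atTop, t ^ ν *
      (∫ s in Set.Ioi t, s ^ (-(ν + 1)) * Real.exp (-x ^ 2 / (2 * s))) ≤ ν⁻¹ := by
    filter_upwards [eventually_gt_atTop 0] with t ht
    have h1 : (∫ s in Set.Ioi t, s ^ (-(ν + 1)) * Real.exp (-x ^ 2 / (2 * s))) ≤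
        t ^ (-ν) / ν := by
      rw [← hval t ht]
      apply setIntegral_mono_on
      · exact integrableOn_aux ν x t hν ht
      · exact integrableOn_Ioi_rpow_of_lt (by linarith : -(ν+1) < -1) ht
      · exact measurableSet_Ioi
      · intro s hs
        have hs0 : 0 < s := ht.trans hs
        calc s ^ (-(ν + 1)) * Real.exp (-x ^ 2 / (2 * s)) ≤ s ^ (-(ν + 1)) * 1 := by
              apply mul_le_mul_of_nonneg_left _ (Real.rpow_nonneg hs0.le _)
              rw [Real.exp_le_one_iff]
              exact div_nonpos_of_nonpos_of_nonneg (neg_nonpos.2 (by positivity)) (by positivity)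
          _ = _ := mul_one _
    calc t ^ ν * (∫ s in Set.Ioi t, s ^ (-(ν + 1)) * Real.exp (-x ^ 2 / (2 * s)))
        ≤ t ^ ν * (t ^ (-ν) / ν) := mul_le_mul_of_nonneg_left h1 (Real.rpow_nonneg ht.le _)
      _ = ν⁻¹ := by
          rw [Real.rpow_neg ht.le]
          field_simp
  have hexp : Tendsto (fun t : ℝ => Real.exp (-x ^ 2 / (2 * t)) / ν) atTop (nhds ν⁻¹) := by
    have h0 : Tendsto (fun t : ℝ => -x ^ 2 / (2 * t)) atTop (nhds 0) :=
      Tendsto.div_atTop tendsto_const_nhds (tendsto_id.const_mul_atTop two_pos)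
    have := (Real.continuous_exp.tendsto 0).comp h0
    rw [Real.exp_zero] at this
    simpa [div_eq_mul_inv, one_mul] using this.div_const ν
  exact tendsto_of_tendsto_of_tendsto_of_le_of_le' hexp tendsto_const_nhds hlow hup

lemma keyF (ν x : ℝ) (hν : 0 < ν) :
    Tendsto (fun t : ℝ => t ^ ν * F ν x t) atTop
      (nhds (x ^ (2 * ν) / (2 ^ ν * Real.Gamma ν) * ν⁻¹)) := by
  have := (key ν x hν).const_mul (x ^ (2 * ν) / (2 ^ ν * Real.Gamma ν))
  apply this.congr
  intro t
  simp only [F]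
  ring

lemma Fzero (ν x : ℝ) (hν : 0 < ν) :
    Tendsto (fun t : ℝ => F ν x t) atTop (nhds 0) := by
  have h1 : Tendsto (fun t : ℝ => t ^ (-ν)) atTop (nhds 0) := tendsto_rpow_neg_atTop hν
  have h2 := h1.mul (keyF ν x hν)
  rw [zero_mul] at h2
  apply h2.congr'
  filter_upwards [eventually_gt_atTop 0] with t ht
  rw [Real.rpow_neg ht.le, ← mul_assoc, inv_mul_cancel₀ (ne_of_gt (Real.rpow_pos_of_pos ht ν)),
    one_mul]

theorem stmt_13 (ν a b : ℝ) (hν : 0 < ν) (hb : 0 ≤ b) (hba : b < a) :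
    Tendsto (fun t : ℝ => t ^ ν * ((F ν a t - F ν b t) / (1 - F ν b t))) atTop
      (nhds ((a ^ (2 * ν) - b ^ (2 * ν)) / (2 ^ ν * Real.Gamma (ν + 1)))) := by
  have hnum : Tendsto (fun t : ℝ => t ^ ν * F ν a t - t ^ ν * F ν b t) atTop
      (nhds (a ^ (2 * ν) / (2 ^ ν * Real.Gamma ν) * ν⁻¹ -
        b ^ (2 * ν) / (2 ^ ν * Real.Gamma ν) * ν⁻¹)) :=
    (keyF ν a hν).sub (keyF ν b hν)
  have hden : Tendsto (fun t : ℝ => 1 - F ν b t) atTop (nhds 1) := by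
    have := (Fzero ν b hν).const_sub 1
    simpa using this
  have := hnum.div hden one_ne_zero
  have heq : (a ^ (2 * ν) / (2 ^ ν * Real.Gamma ν) * ν⁻¹ -
      b ^ (2 * ν) / (2 ^ ν * Real.Gamma ν) * ν⁻¹) / 1 =
      (a ^ (2 * ν) - b ^ (2 * ν)) / (2 ^ ν * Real.Gamma (ν + 1)) := by
    rw [Real.Gamma_add_one (ne_of_gt hν), div_one]
    have hΓ : Real.Gamma ν ≠ 0 := ne_of_gt (Real.Gamma_pos_of_pos hν)
    have h2 : (2:ℝ) ^ ν ≠ 0 := ne_of_gt (Real.rpow_pos_of_pos two_pos ν)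
    field_simp [ne_of_gt hν]
    try ring
    try exact Or.inl trivial
  rw [heq] at this
  apply this.congr
  intro t
  simp only [Pi.div_apply]
  ring
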